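/- arXiv:2407.07508 — 2 statements merged into one kernel-verified Lean document; each statement's English description precedes it below -/
import Mathlib

section
/- (Rogers–Szegő polynomials.) Let q ∈ (0,1) and set α_n = (-1)^n q^{(n+1)/2} for all n ≥ 0 (so |α_n| < 1). Then for all nonnegative integers n ≥ m, μ_{n,m} = [n choose m]_q · q^{(n-m)²/2}, where [n choose m]_q = ((1-q^n)(1-q^{n-1})⋯(1-q^{n-m+1}))/((1-q^m)(1-q^{m-1})⋯(1-q)) is the q-binomial coefficient (equal to 1 when m = 0); and μ_{n,m} = 0 for n < m. -/
open Polynomial LaurentPolynomial Finset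

noncomputable section

/-- Extension of the Verblunsky coefficients to integer indices, with the
convention `α₋₁ = -1` (and junk value `-1` for all negative indices). -/
def az (α : ℕ → ℂ) (k : ℤ) : ℂ := if 0 ≤ k then α k.toNat else -1

/-- The monic OPUC `Φ_n` defined by Szegő's recurrence
`Φ_{n+1}(z) = z·Φ_n(z) - conj(α_n)·Φ_n^*(z)`, where `Φ_n^*` is the reverse
polynomial `reflect n (map conj Φ_n)`. -/
def szego (α : ℕ → ℂ) : ℕ → Polynomial ℂ
  | 0 => 1
  | n + 1 =>
      Polynomial.X * szego α n -
        Polynomial.C ((starRingEnd ℂ) (α n)) *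
          Polynomial.reflect n ((szego α n).map (starRingEnd ℂ))

/-- `f̄(1/z)` as a Laurent polynomial, for a polynomial `f`. -/
def polyBarInv (f : Polynomial ℂ) : LaurentPolynomial ℂ :=
  f.sum fun k c => LaurentPolynomial.C ((starRingEnd ℂ) c) * LaurentPolynomial.T (-(k : ℤ))

/-- `f̄(1/z)` as a Laurent polynomial, for a Laurent polynomial `f`. -/
def laurentBarInv (f : LaurentPolynomial ℂ) : LaurentPolynomial ℂ :=
  Finsupp.sum f.coeff fun k c => LaurentPolynomial.C ((starRingEnd ℂ) c) * LaurentPolynomial.T (-k)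

/-- The generalized moment `μ_{n,r,s} = ⟨Φ_s(z), z^n·Φ_r(z)⟩ / ⟨Φ_s(z), Φ_s(z)⟩`,
where `⟨f,g⟩ = L(f(z)·ḡ(1/z))` and `⟨Φ_s, Φ_s⟩ = ∏_{j<s} (1 - |α_j|²)`. -/
def genMom (L : LaurentPolynomial ℂ →ₗ[ℂ] ℂ) (α : ℕ → ℂ) (n : ℤ) (r s : ℕ) : ℂ :=
  L (Polynomial.toLaurent (szego α s) *
      laurentBarInv (LaurentPolynomial.T n * Polynomial.toLaurent (szego α r))) /
    ∏ j ∈ Finset.range s, ((1 - Complex.normSq (α j) : ℝ) : ℂ)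

/-- `IsLatticePath S p l q` : the list of steps `l`, starting at `p`, forms a lattice
path from `p` to `q` lying weakly above the x-axis, each step `st` taken from a
position `x` satisfying the (possibly position-dependent) step condition `S x st`. -/
def IsLatticePath (S : ℤ × ℤ → ℤ × ℤ → Prop) : ℤ × ℤ → List (ℤ × ℤ) → ℤ × ℤ → Prop
  | p, [], q => p = q ∧ 0 ≤ p.2
  | p, st :: rest, q => 0 ≤ p.2 ∧ S p st ∧ IsLatticePath S (p + st) rest q

/-- The weight of a path: the product of the weights of its steps, where the weight
of a step may depend on its starting position. -/
def pathWeight (w : ℤ × ℤ → ℤ × ℤ → ℂ) : ℤ × ℤ → List (ℤ × ℤ) → ℂ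
  | _, [] => 1
  | p, st :: rest => w p st * pathWeight w (p + st) rest

/-- Łukasiewicz steps: `(1, k)` with `k ≤ 1`. -/
def lukaStep (_p st : ℤ × ℤ) : Prop := st.1 = 1 ∧ st.2 ≤ 1

/-- Łukasiewicz step weights: an up-step has weight `1`, and a step
`(a,b) → (a+1,b-k)` (`0 ≤ k ≤ b`) has weight
`-α_b·conj(α_{b-k-1})·∏_{j=b-k}^{b-1} (1-|α_j|²)`. -/
def wtLstep (α : ℕ → ℂ) (p st : ℤ × ℤ) : ℂ :=
  if st.2 = 1 then 1
  else
    -(az α p.2) * (starRingEnd ℂ) (az α (p.2 + st.2 - 1)) *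
      ∏ j ∈ Finset.Ico (p.2 + st.2) p.2, ((1 - Complex.normSq (az α j) : ℝ) : ℂ)

/-- Gentle Motzkin steps: `(1,1)` (only at even `a+b`), `(1,0)`, `(1,-1)` (only at odd `a+b`). -/
def gentleStep (p st : ℤ × ℤ) : Prop :=
  (st = (1, 1) ∧ Even (p.1 + p.2)) ∨ st = (1, 0) ∨ (st = (1, -1) ∧ Odd (p.1 + p.2))

/-- Gentle Motzkin step weights. -/
def wtMstep (α : ℕ → ℂ) (p st : ℤ × ℤ) : ℂ :=
  if st = (1, 1) then 1
  else if st = (1, -1) then ((1 - Complex.normSq (az α (p.2 - 1)) : ℝ) : ℂ)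
  else if Even (p.1 + p.2) then az α p.2
  else -(starRingEnd ℂ) (az α (p.2 - 1))

/-- Schröder steps: `(1,1)`, `(1,0)`, `(0,-1)`. -/
def schStep (_p st : ℤ × ℤ) : Prop := st = (1, 1) ∨ st = (1, 0) ∨ st = (0, -1)

/-- Schröder step weights. -/
def wtSstep (α : ℕ → ℂ) (p st : ℤ × ℤ) : ℂ :=
  if st = (1, 1) then 1
  else if st = (1, 0) then -((starRingEnd ℂ) (az α (p.2 - 1)) / (starRingEnd ℂ) (az α p.2))
  else
    ((starRingEnd ℂ) (az α (p.2 - 2)) / (starRingEnd ℂ) (az α (p.2 - 1))) *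
      ((1 - Complex.normSq (az α (p.2 - 1)) : ℝ) : ℂ)


/- ### auxiliary real development -/

def rsa (s : ℝ) (n : ℕ) : ℝ := (-1)^n * s^(n+1)

def rsP (s : ℝ) : ℕ → Polynomial ℝ
  | 0 => 1
  | n+1 => Polynomial.X * rsP s n - Polynomial.C (rsa s n) * Polynomial.reflect n (rsP s n)

lemma rsP_coeff_top (s : ℝ) : ∀ m : ℕ, (rsP s m).coeff m = 1 ∧ ∀ k, m < k → (rsP s m).coeff k = 0 := by
  intro m
  induction m with
  | zero =>
    refine ⟨by simp [rsP], fun k hk => ?_⟩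
    simp [rsP, Polynomial.coeff_one]
    omega
  | succ n ih =>
    obtain ⟨h1, h2⟩ := ih
    have hc : ∀ k, (rsP s (n+1)).coeff (k+1)
        = (rsP s n).coeff k - rsa s n * (rsP s n).coeff (Polynomial.revAt n (k+1)) := by
      intro k
      show (Polynomial.X * rsP s n - _).coeff _ = _
      rw [Polynomial.coeff_sub, Polynomial.coeff_X_mul, Polynomial.coeff_C_mul,
        Polynomial.coeff_reflect]
    constructor
    · rw [hc, Polynomial.revAt_eq_self_of_lt (by omega), h1, h2 _ (by omega),
        mul_zero, sub_zero]
    · intro k hk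
      obtain ⟨j, rfl⟩ : ∃ j, k = j + 1 := ⟨k - 1, by omega⟩
      rw [hc, Polynomial.revAt_eq_self_of_lt (by omega), h2 _ (by omega),
        h2 _ (by omega), mul_zero, sub_zero]

lemma zpow_sum_range (x : ℝ) (hx : x ≠ 0) (f : ℕ → ℤ) (m : ℕ) :
    x ^ (∑ i ∈ range m, f i) = ∏ i ∈ range m, x ^ f i := by
  induction m with
  | zero => simp
  | succ n ih => rw [Finset.sum_range_succ, Finset.prod_range_succ, zpow_add₀ hx, ih]

lemma sum_range_two_cast (m : ℕ) : ∑ i ∈ range m, (2*(i:ℤ)) = m*(m-1) := by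
  induction m with
  | zero => simp
  | succ n ih => rw [Finset.sum_range_succ, ih]; push_cast; ring

lemma one_sub_zpow_neg {s : ℝ} (hs : s ≠ 0) (e : ℤ) :
    1 - s^(-e) = (-1) * s^(-e) * (1 - s^e) := by
  have h : s^(-e) * s^e = 1 := by rw [← zpow_add₀ hs]; simp
  ring_nf
  nlinarith [h]

lemma prod_rev {s : ℝ} (hs : s ≠ 0) (m : ℕ) (t : ℤ) :
    ∏ i ∈ range m, (1 - s ^ (2*((m:ℤ) - t - i)))
      = (-1)^m * s^((m:ℤ)*m + m - 2*m*t) * ∏ i ∈ range m, (1 - s ^ (2*(t - 1 - i))) := by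
  have h1 : ∏ i ∈ range m, (1 - s ^ (2*((m:ℤ) - t - i)))
      = ∏ i ∈ range m, (1 - s ^ (-(2*(t - 1 - i)))) := by
    rw [← Finset.prod_range_reflect]
    refine Finset.prod_congr rfl fun i hi => ?_
    have hi' : i < m := Finset.mem_range.mp hi
    have : ((m - 1 - i : ℕ) : ℤ) = (m:ℤ) - 1 - i := by omega
    rw [this]
    congr 1
    ring
  rw [h1]
  have h2 : ∀ i ∈ range m, (1 - s ^ (-(2*(t - 1 - i))))
      = (-1) * s^(-(2*(t - 1 - i))) * (1 - s ^ (2*(t - 1 - i))) := fun i _ =>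
    one_sub_zpow_neg hs _
  rw [Finset.prod_congr rfl h2, Finset.prod_mul_distrib, Finset.prod_mul_distrib,
    Finset.prod_const, ← zpow_sum_range s hs]
  have h3 : (∑ i ∈ range m, -(2*(t - 1 - i))) = (m:ℤ)*m + m - 2*m*t := by
    have : ∀ i ∈ range m, -(2*(t - 1 - (i:ℤ))) = 2*(i:ℤ) + (2 - 2*t) := fun i _ => by ring
    rw [Finset.sum_congr rfl this, Finset.sum_add_distrib, sum_range_two_cast,
      Finset.sum_const, Finset.card_range]
    ring
  rw [h3]
  simp [Finset.card_range]

lemma rs_key {s : ℝ} (hs : 0 < s) : ∀ (m : ℕ) (n : ℤ),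
    ∑ k ∈ range (m+1), (rsP s m).coeff k * s ^ (((k:ℤ) - n)^2) =
      s ^ ((n - m)^2) * ∏ i ∈ range m, (1 - s ^ (2*(n - i))) := by
  have hs0 : s ≠ 0 := hs.ne'
  intro m
  induction m with
  | zero =>
    intro n
    rw [Finset.sum_range_one]
    have h0 : ((rsP s 0).coeff 0) = 1 := by simp [rsP]
    rw [h0, one_mul, Finset.range_zero, Finset.prod_empty, mul_one]
    congr 1
    push_cast
    ring
  | succ m ih =>
    intro n
    set f := rsP s m with hf
    have hsplit : ∑ k ∈ range (m+2), (rsP s (m+1)).coeff k * s ^ (((k:ℤ) - n)^2)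
        = (∑ k ∈ range (m+2), (Polynomial.X * f).coeff k * s ^ (((k:ℤ) - n)^2))
          - rsa s m * ∑ k ∈ range (m+2),
              (Polynomial.reflect m f).coeff k * s ^ (((k:ℤ) - n)^2) := by
      rw [Finset.mul_sum, ← Finset.sum_sub_distrib]
      refine Finset.sum_congr rfl fun k _ => ?_
      show (Polynomial.X * f - Polynomial.C (rsa s m) * Polynomial.reflect m f).coeff k * _ = _
      rw [Polynomial.coeff_sub, Polynomial.coeff_C_mul]
      ring
    rw [hsplit]
    have hA : (∑ k ∈ range (m+2), (Polynomial.X * f).coeff k * s ^ (((k:ℤ) - n)^2))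
        = s ^ ((n - 1 - m)^2) * ∏ i ∈ range m, (1 - s ^ (2*(n - 1 - i))) := by
      rw [Finset.sum_range_succ']
      simp only [Polynomial.coeff_X_mul, Polynomial.mul_coeff_zero, Polynomial.coeff_X_zero,
        zero_mul, add_zero]
      have h : ∀ k ∈ range (m+1), f.coeff k * s ^ ((((k+1:ℕ):ℤ) - n)^2)
          = f.coeff k * s ^ (((k:ℤ) - (n-1))^2) := by
        intro k _
        congr 1
        push_cast
        ring
      rw [Finset.sum_congr rfl h, ih (n-1)]
    have hB : (∑ k ∈ range (m+2), (Polynomial.reflect m f).coeff k * s ^ (((k:ℤ) - n)^2))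
        = s ^ (n^2) * ∏ i ∈ range m, (1 - s ^ (2*((m:ℤ) - n - i))) := by
      rw [Finset.sum_range_succ]
      have htop : (Polynomial.reflect m f).coeff (m+1) = 0 := by
        rw [Polynomial.coeff_reflect, Polynomial.revAt_eq_self_of_lt (by omega)]
        exact (rsP_coeff_top s m).2 _ (by omega)
      rw [htop, zero_mul, add_zero]
      have h : ∀ k ∈ range (m+1), (Polynomial.reflect m f).coeff k * s ^ (((k:ℤ) - n)^2)
          = f.coeff (m - k) * s ^ ((((m-k:ℕ):ℤ) - ((m:ℤ) - n))^2) := by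
        intro k hk
        have hk' : k < m + 1 := Finset.mem_range.mp hk
        rw [Polynomial.coeff_reflect, Polynomial.revAt_le (by omega)]
        congr 1
        have : ((m - k : ℕ):ℤ) = (m:ℤ) - k := by omega
        rw [this]
        ring
      rw [Finset.sum_congr rfl h, ← Finset.sum_range_reflect]
      have h2 : ∀ k ∈ range (m+1),
          f.coeff (m - (m + 1 - 1 - k)) * s ^ ((((m-(m+1-1-k):ℕ):ℤ) - ((m:ℤ) - n))^2)
          = f.coeff k * s ^ (((k:ℤ) - ((m:ℤ) - n))^2) := by
        intro k hk
        have hk' : k < m + 1 := Finset.mem_range.mp hk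
        have e1 : m - (m + 1 - 1 - k) = k := by omega
        rw [e1]
      rw [Finset.sum_congr rfl h2, ih ((m:ℤ) - n)]
      have e : ((m:ℤ) - n - m)^2 = n^2 := by ring
      rw [e]
    rw [hA, hB, prod_rev hs0 m n]
    have hrsa : rsa s m = (-1)^m * s^((m:ℤ)+1) := by
      rw [rsa, show ((m:ℤ)+1) = ((m+1:ℕ):ℤ) by push_cast; ring, zpow_natCast]
    rw [hrsa]
    have hR : ∏ i ∈ range (m+1), (1 - s ^ (2*(n - i)))
        = (∏ i ∈ range m, (1 - s ^ (2*(n - 1 - i)))) * (1 - s ^ (2*n)) := by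
      rw [Finset.prod_range_succ']
      congr 1
      · refine Finset.prod_congr rfl fun i _ => ?_
        congr 1
        push_cast
        ring
      · congr 1
        push_cast
        ring
    rw [hR]
    set P := ∏ i ∈ range m, (1 - s ^ (2*(n - 1 - i))) with hP
    have hmm : ((-1:ℝ)^m * (-1:ℝ)^m) = 1 := by
      rw [← pow_add, ← two_mul, pow_mul]
      norm_num
    have e1 : (-1:ℝ)^m * s^((m:ℤ)+1) * (s^(n^2) * ((-1:ℝ)^m * s^((m:ℤ)*m + m - 2*m*n) * P))
        = s^((((m:ℤ)+1) + n^2) + ((m:ℤ)*m + m - 2*m*n)) * P := by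
      rw [zpow_add₀ hs0 ((m:ℤ)+1+n^2) ((m:ℤ)*m + m - 2*m*n), zpow_add₀ hs0 ((m:ℤ)+1) (n^2)]
      linear_combination (s^((m:ℤ)+1) * s^(n^2) * s^((m:ℤ)*m + m - 2*m*n) * P) * hmm
    rw [e1]
    have ha : ((n - 1 - (m:ℤ))^2) = ((n - ((m+1:ℕ):ℤ))^2) := by push_cast; ring
    have hE : ((((m:ℤ)+1) + n^2) + ((m:ℤ)*m + m - 2*m*n)) = ((n - ((m+1:ℕ):ℤ))^2) + 2*n := by
      push_cast; ring
    rw [ha, hE, zpow_add₀ hs0]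
    ring

/- ### complex side -/

lemma conj_comp_ofReal : (starRingEnd ℂ).comp Complex.ofRealHom = Complex.ofRealHom :=
  RingHom.ext fun x => Complex.conj_ofReal x

lemma szego_eq (s : ℝ) (α : ℕ → ℂ) (hα : ∀ n, α n = ((rsa s n : ℝ) : ℂ)) :
    ∀ m, szego α m = (rsP s m).map Complex.ofRealHom := by
  intro m
  induction m with
  | zero => show (1 : Polynomial ℂ) = _ ; rw [show rsP s 0 = 1 from rfl, Polynomial.map_one]
  | succ n ih =>
    show Polynomial.X * szego α n - _ = _
    rw [ih, Polynomial.map_map, conj_comp_ofReal, Polynomial.reflect_map,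
      hα n, Complex.conj_ofReal]
    rw [show rsP s (n+1) = Polynomial.X * rsP s n
        - Polynomial.C (rsa s n) * Polynomial.reflect n (rsP s n) from rfl]
    rw [Polynomial.map_sub, Polynomial.map_mul, Polynomial.map_mul, Polynomial.map_X,
      Polynomial.map_C]
    rfl

/-- Rogers–Szegő polynomials: with `α_n = (-1)ⁿ q^{(n+1)/2}`,
`q ∈ (0,1)`, the moments are `μ_{n,m} = [n choose m]_q · q^{(n-m)²/2}` for `n ≥ m`
and `0` for `n < m`. -/
theorem rogers_szego (q : ℝ) (hq0 : 0 < q) (hq1 : q < 1) (α : ℕ → ℂ)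
    (hαdef : α = fun n : ℕ => (((-1 : ℝ) ^ n * q ^ (((n : ℝ) + 1) / 2) : ℝ) : ℂ))
    (L : LaurentPolynomial ℂ →ₗ[ℂ] ℂ) (hL1 : L 1 = 1)
    (hLphi : ∀ k : ℕ, 1 ≤ k → L (Polynomial.toLaurent (szego α k)) = 0)
    (hLbar : ∀ k : ℕ, 1 ≤ k → L (polyBarInv (szego α k)) = 0) :
    ∀ n m : ℕ,
      (m ≤ n → genMom L α n 0 m =
        ((((∏ i ∈ Finset.range m, (1 - q ^ (n - i))) /
            (∏ i ∈ Finset.range m, (1 - q ^ (i + 1)))) *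
          q ^ ((((n : ℝ) - (m : ℝ)) ^ 2) / 2) : ℝ) : ℂ)) ∧
      (n < m → genMom L α n 0 m = 0) := by
  set s : ℝ := q ^ ((1:ℝ)/2) with hsdef
  have hs0 : 0 < s := Real.rpow_pos_of_pos hq0 _
  have hsne : s ≠ 0 := hs0.ne'
  have hq2 : s ^ 2 = q := by
    rw [hsdef, ← Real.rpow_natCast (q ^ ((1:ℝ)/2)) 2, ← Real.rpow_mul hq0.le]
    norm_num
  have hα : ∀ k, α k = ((rsa s k : ℝ) : ℂ) := by
    intro k
    rw [hαdef]
    show ((((-1:ℝ)^k * q ^ (((k:ℝ)+1)/2) : ℝ)) : ℂ) = _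
    rw [Complex.ofReal_inj]
    rw [rsa]
    congr 1
    rw [show ((k:ℝ)+1)/2 = ((1:ℝ)/2) * (((k+1:ℕ)):ℝ) by push_cast; ring,
      Real.rpow_mul hq0.le, ← hsdef, Real.rpow_natCast]
  have hphi : ∀ m, szego α m = (rsP s m).map Complex.ofRealHom := szego_eq s α hα
  have hcoeff : ∀ m k, (szego α m).coeff k = (((rsP s m).coeff k : ℝ) : ℂ) := by
    intro m k
    rw [hphi, Polynomial.coeff_map]
    rfl
  have hdeg : ∀ m, (szego α m).natDegree < m + 1 := by
    intro m
    refine Nat.lt_succ_of_le (Polynomial.natDegree_le_iff_coeff_eq_zero.mpr fun N hN => ?_)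
    rw [hcoeff, (rsP_coeff_top s m).2 N hN, Complex.ofReal_zero]
  have hLC : ∀ (a : ℂ) (j : ℤ), L (LaurentPolynomial.C a * LaurentPolynomial.T j)
      = a * L (LaurentPolynomial.T j) := by
    intro a j
    have : LaurentPolynomial.C a * LaurentPolynomial.T j = a • LaurentPolynomial.T j := by
      rw [← LaurentPolynomial.single_eq_C_mul_T]
      rw [show (LaurentPolynomial.T j : LaurentPolynomial ℂ) = .single j 1 from rfl]
      rw [AddMonoidAlgebra.smul_single', mul_one]
    rw [this, map_smul, smul_eq_mul]
  have hLmul : ∀ (m : ℕ) (t : ℤ), L (Polynomial.toLaurent (szego α m) * LaurentPolynomial.T t)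
      = ∑ k ∈ range (m+1), (((rsP s m).coeff k : ℝ) : ℂ) * L (LaurentPolynomial.T ((k:ℤ) + t)) := by
    intro m t
    have hexp : Polynomial.toLaurent (szego α m)
        = ∑ k ∈ range (m+1),
            LaurentPolynomial.C (((rsP s m).coeff k : ℝ) : ℂ) * LaurentPolynomial.T (k:ℤ) := by
      conv_lhs => rw [(szego α m).as_sum_range' (m+1) (hdeg m)]
      rw [map_sum]
      refine Finset.sum_congr rfl fun k _ => ?_
      rw [Polynomial.toLaurent_C_mul_T, hcoeff]
    rw [hexp, Finset.sum_mul, map_sum]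
    refine Finset.sum_congr rfl fun k _ => ?_
    rw [mul_assoc, ← LaurentPolynomial.T_add, hLC]
  have hbar : ∀ m : ℕ, L (polyBarInv (szego α m))
      = ∑ k ∈ range (m+1), (((rsP s m).coeff k : ℝ) : ℂ) * L (LaurentPolynomial.T (-(k:ℤ))) := by
    intro m
    rw [polyBarInv, Polynomial.sum_over_range' _ (fun n => by simp) (m+1) (hdeg m), map_sum]
    refine Finset.sum_congr rfl fun k _ => ?_
    rw [hcoeff, Complex.conj_ofReal, hLC]
  -- the moments
  have hmom : ∀ M : ℕ, L (LaurentPolynomial.T ((M:ℕ):ℤ)) = ((s ^ (((M:ℕ):ℤ)^2) : ℝ) : ℂ)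
      ∧ L (LaurentPolynomial.T (-((M:ℕ):ℤ))) = ((s ^ (((M:ℕ):ℤ)^2) : ℝ) : ℂ) := by
    intro M
    induction M using Nat.strong_induction_on with
    | _ M ih =>
      match M with
      | 0 =>
        constructor <;>
          simpa [LaurentPolynomial.T_zero] using hL1
      | (m+1) =>
        -- the real sum identity at n = 0
        have hkey := rs_key hs0 (m+1) 0
        have hzero : ∏ i ∈ range (m+1), (1 - s ^ (2*((0:ℤ) - i))) = 0 := by
          refine Finset.prod_eq_zero (Finset.mem_range.mpr (Nat.succ_pos m)) ?_
          norm_num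
        rw [hzero, mul_zero] at hkey
        have hsum0 : ∑ k ∈ range (m+2), (rsP s (m+1)).coeff k * s ^ (((k:ℤ))^2) = 0 := by
          rw [← hkey]
          refine Finset.sum_congr rfl fun k _ => ?_
          rw [sub_zero]
        have hreal : ∑ k ∈ range (m+1), (rsP s (m+1)).coeff k * s ^ (((k:ℤ))^2)
            = - s ^ ((((m+1:ℕ)):ℤ)^2) := by
          have h5 := hsum0
          rw [Finset.sum_range_succ, (rsP_coeff_top s (m+1)).1, one_mul] at h5
          linarith
        constructor
        · have h1 := hLphi (m+1) (Nat.succ_le_succ (Nat.zero_le m))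
          have h2 := hLmul (m+1) 0
          rw [LaurentPolynomial.T_zero, mul_one, h1] at h2
          simp only [add_zero] at h2
          rw [Finset.sum_range_succ, (rsP_coeff_top s (m+1)).1] at h2
          have h3 : ∑ k ∈ range (m+1), (((rsP s (m+1)).coeff k : ℝ) : ℂ)
              * L (LaurentPolynomial.T ((k:ℤ)))
              = ((∑ k ∈ range (m+1), (rsP s (m+1)).coeff k * s ^ (((k:ℤ))^2) : ℝ) : ℂ) := by
            rw [Complex.ofReal_sum]
            refine Finset.sum_congr rfl fun k hk => ?_
            rw [(ih k (Finset.mem_range.mp hk)).1]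
            push_cast
            ring
          rw [h3, hreal] at h2
          rw [Complex.ofReal_one, one_mul] at h2
          have := h2.symm
          rw [eq_comm, ← sub_eq_zero] at this ⊢
          push_cast at this ⊢
          linear_combination this
        · have h1 := hLbar (m+1) (Nat.succ_le_succ (Nat.zero_le m))
          have h2 := hbar (m+1)
          rw [h1] at h2
          rw [Finset.sum_range_succ, (rsP_coeff_top s (m+1)).1] at h2
          have h3 : ∑ k ∈ range (m+1), (((rsP s (m+1)).coeff k : ℝ) : ℂ)
              * L (LaurentPolynomial.T (-(k:ℤ)))
              = ((∑ k ∈ range (m+1), (rsP s (m+1)).coeff k * s ^ (((k:ℤ))^2) : ℝ) : ℂ) := by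
            rw [Complex.ofReal_sum]
            refine Finset.sum_congr rfl fun k hk => ?_
            rw [(ih k (Finset.mem_range.mp hk)).2]
            push_cast
            ring
          rw [h3, hreal] at h2
          rw [Complex.ofReal_one, one_mul] at h2
          have := h2.symm
          rw [eq_comm, ← sub_eq_zero] at this ⊢
          push_cast at this ⊢
          linear_combination this
  have hmomZ : ∀ j : ℤ, L (LaurentPolynomial.T j) = ((s ^ (j^2) : ℝ) : ℂ) := by
    intro j
    obtain ⟨M, rfl | rfl⟩ := Int.eq_nat_or_neg j
    · exact (hmom M).1
    · rw [(hmom M).2]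
      congr 2
      ring
  -- now the main computation
  intro n m
  have hnum : L (Polynomial.toLaurent (szego α m) *
        laurentBarInv (LaurentPolynomial.T (n:ℤ) * Polynomial.toLaurent (szego α 0)))
      = (((s ^ (((n:ℤ) - m)^2) * ∏ i ∈ range m, (1 - s ^ (2*((n:ℤ) - i)))) : ℝ) : ℂ) := by
    have h0 : Polynomial.toLaurent (szego α 0) = 1 := by
      rw [show szego α 0 = 1 from rfl, map_one]
    rw [h0, mul_one]
    have hbarT : laurentBarInv (LaurentPolynomial.T (n:ℤ)) = LaurentPolynomial.T (-(n:ℤ)) := by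
      rw [laurentBarInv]
      rw [show (LaurentPolynomial.T (n:ℤ) : LaurentPolynomial ℂ)
          = .single ((n:ℕ):ℤ) 1 from rfl]
      rw [AddMonoidAlgebra.coeff_single, Finsupp.sum_single_index (by simp)]
      simp
    rw [hbarT, hLmul m (-(n:ℤ))]
    have h : ∀ k ∈ range (m+1), (((rsP s m).coeff k : ℝ) : ℂ)
        * L (LaurentPolynomial.T ((k:ℤ) + -(n:ℤ)))
        = ((((rsP s m).coeff k * s ^ (((k:ℤ) - (n:ℤ))^2) : ℝ)) : ℂ) := by
      intro k _
      rw [hmomZ]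
      rw [show ((k:ℤ) + -(n:ℤ)) = ((k:ℤ) - (n:ℤ)) by ring]
      push_cast
      ring
    rw [Finset.sum_congr rfl h, ← Complex.ofReal_sum, rs_key hs0 m (n:ℤ)]
  have hden : ∏ j ∈ Finset.range m, ((1 - Complex.normSq (α j) : ℝ) : ℂ)
      = ((∏ j ∈ range m, (1 - s ^ (2*(j+1))) : ℝ) : ℂ) := by
    rw [Complex.ofReal_prod]
    refine Finset.prod_congr rfl fun j _ => ?_
    rw [hα, Complex.normSq_ofReal]
    rw [Complex.ofReal_inj]
    congr 1
    rw [rsa, show 2*(j+1) = (j+1)+(j+1) by ring, pow_add]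
    have hj : ((-1:ℝ)^j * (-1:ℝ)^j) = 1 := by
      rw [← pow_add, ← two_mul, pow_mul]
      norm_num
    linear_combination (s^(j+1)*s^(j+1)) * hj
  constructor
  · intro hmn
    rw [genMom, hnum, hden, ← Complex.ofReal_div, Complex.ofReal_inj]
    have e1 : ∀ i ∈ range m, (1 - s ^ (2*((n:ℤ) - i)) : ℝ) = 1 - q^(n - i) := by
      intro i hi
      have him : i < m := Finset.mem_range.mp hi
      congr 1
      rw [← hq2, ← pow_mul,
        show (2*((n:ℤ)-(i:ℕ))) = ((2*(n-i):ℕ):ℤ) by omega, zpow_natCast]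
    have e2 : ∀ j ∈ range m, ((1 - s ^ (2*(j+1))) : ℝ) = 1 - q^(j+1) := by
      intro j _
      rw [← hq2, ← pow_mul]
    have e3 : q ^ ((((n:ℝ) - (m:ℝ))^2)/2) = s ^ ((((n:ℤ) - (m:ℕ))^2 : ℤ)) := by
      rw [show ((((n:ℝ) - (m:ℝ))^2)/2) = ((1:ℝ)/2) * (((((n:ℤ) - (m:ℕ))^2 : ℤ)):ℝ) by
          push_cast; ring,
        Real.rpow_mul hq0.le, ← hsdef, Real.rpow_intCast]
    rw [← Finset.prod_congr rfl e1, ← Finset.prod_congr rfl e2, e3]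
    ring
  · intro hnm
    rw [genMom, hnum]
    have hz : ∏ i ∈ range m, ((1 - s ^ (2*((n:ℤ) - i))) : ℝ) = 0 := by
      refine Finset.prod_eq_zero (Finset.mem_range.mpr hnm) ?_
      norm_num
    rw [hz, mul_zero, Complex.ofReal_zero, zero_div]

end
end

section
/- Define ν_{n,r,s} = ⟨Φ_s(z), z^n·Φ_r^*(z)⟩ / ⟨Φ_s(z), Φ_s(z)⟩ (the conjugate of the coefficient of Φ_s in the expansion of z^n·Φ_r^*(z) in the basis {Φ_k}). Then for all nonnegative integers n, r, and s with α_r ≠ 0, ν_{n,r,s} = α_r^{-1} · Σ_p wt_L(p), where the sum is over all Łukasiewicz paths p from (-1,r) to (n,s) whose first step is not an up-step (1,1). -/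
open Polynomial LaurentPolynomial Finset

noncomputable section

namespace OPUC


local notation "bar" => laurentBarInv

lemma bar_single (k : ℤ) (a : ℂ) :
    bar (AddMonoidAlgebra.single k a) = AddMonoidAlgebra.single (-k) ((starRingEnd ℂ) a) := by
  unfold laurentBarInv
  rw [AddMonoidAlgebra.coeff_single, Finsupp.sum_single_index] <;> simp [single_eq_C_mul_T]

lemma bar_add (f g : LaurentPolynomial ℂ) : bar (f + g) = bar f + bar g := by
  unfold laurentBarInv
  rw [AddMonoidAlgebra.coeff_add]
  apply Finsupp.sum_add_index <;> intros <;> simp [mul_add, add_mul]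

lemma bar_zero : bar (0 : LaurentPolynomial ℂ) = 0 := by
  simp [laurentBarInv]

lemma bar_mul (f g : LaurentPolynomial ℂ) : bar (f * g) = bar f * bar g := by
  induction f using LaurentPolynomial.induction_on' with
  | add p q hp hq => rw [add_mul, bar_add, bar_add, hp, hq, add_mul]
  | C_mul_T n a =>
    induction g using LaurentPolynomial.induction_on' with
    | add p q hp hq => rw [mul_add, bar_add, hp, hq, bar_add, mul_add]
    | C_mul_T m b =>
      rw [← single_eq_C_mul_T (R := ℂ) a n, ← single_eq_C_mul_T (R := ℂ) b m]
      rw [AddMonoidAlgebra.single_mul_single (R := ℂ) (M := ℤ)]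
      rw [bar_single, bar_single, bar_single]
      rw [AddMonoidAlgebra.single_mul_single (R := ℂ) (M := ℤ), map_mul, neg_add]

lemma bar_one : bar (1 : LaurentPolynomial ℂ) = 1 := by
  have : (1 : LaurentPolynomial ℂ) = AddMonoidAlgebra.single 0 1 := rfl
  rw [this, bar_single]; simp

lemma bar_T (k : ℤ) : bar (T k : LaurentPolynomial ℂ) = T (-k) := by
  have : (T k : LaurentPolynomial ℂ) = AddMonoidAlgebra.single k 1 := rfl
  rw [this, bar_single, map_one]; rfl

lemma bar_C (a : ℂ) : bar (LaurentPolynomial.C a) = LaurentPolynomial.C ((starRingEnd ℂ) a) := by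
  have : (LaurentPolynomial.C a : LaurentPolynomial ℂ) = AddMonoidAlgebra.single 0 a := rfl
  rw [this, bar_single, neg_zero]; rfl

lemma bar_bar (f : LaurentPolynomial ℂ) : bar (bar f) = f := by
  induction f using LaurentPolynomial.induction_on' with
  | add p q hp hq => rw [bar_add, bar_add, hp, hq]
  | C_mul_T n a =>
    rw [← single_eq_C_mul_T, bar_single, bar_single]; simp





lemma bar_sum {ι : Type*} (s : Finset ι) (g : ι → LaurentPolynomial ℂ) :
    bar (∑ i ∈ s, g i) = ∑ i ∈ s, bar (g i) := by
  classical
  induction s using Finset.induction_on with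
  | empty => simpa using bar_zero
  | insert _ _ h ih => rw [Finset.sum_insert h, Finset.sum_insert h, bar_add, ih]

lemma reflect_sum {ι : Type*} (N : ℕ) (s : Finset ι) (g : ι → Polynomial ℂ) :
    reflect N (∑ i ∈ s, g i) = ∑ i ∈ s, reflect N (g i) := by
  classical
  induction s using Finset.induction_on with
  | empty => simp [reflect_zero]
  | insert _ _ h ih => rw [Finset.sum_insert h, Finset.sum_insert h, reflect_add, ih]

lemma toLaurent_rep (f : Polynomial ℂ) (m : ℕ) (h : f.natDegree < m) :
    Polynomial.toLaurent f
      = ∑ k ∈ range m, LaurentPolynomial.C (f.coeff k) * T (k : ℤ) := by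
  conv_lhs => rw [f.as_sum_range' m h]
  rw [map_sum]
  exact Finset.sum_congr rfl fun k _ => Polynomial.toLaurent_C_mul_T k _

/-- Bridging lemma: the Laurent version of the reversed conjugate. -/
lemma toLaurent_reflect (f : Polynomial ℂ) (r : ℕ) (h : f.natDegree ≤ r) :
    Polynomial.toLaurent (reflect r (f.map (starRingEnd ℂ)))
      = T (r : ℤ) * bar (Polynomial.toLaurent f) := by
  conv_lhs => rw [f.as_sum_range' (r+1) (Nat.lt_succ_of_le h)]
  rw [Polynomial.map_sum, reflect_sum, map_sum]
  rw [toLaurent_rep f (r+1) (Nat.lt_succ_of_le h), bar_sum, Finset.mul_sum]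
  refine Finset.sum_congr rfl fun k hk => ?_
  rw [Polynomial.map_monomial, ← C_mul_X_pow_eq_monomial, reflect_C_mul_X_pow,
    revAt_le (Finset.mem_range_succ_iff.mp hk), Polynomial.toLaurent_C_mul_X_pow,
    bar_mul, bar_C, bar_T]
  have h' : k ≤ r := Finset.mem_range_succ_iff.mp hk
  rw [show ((r - k : ℕ) : ℤ) = r + -k by omega]
  rw [T_add]
  ring


lemma bar_sub (f g : LaurentPolynomial ℂ) : bar (f - g) = bar f - bar g := by
  have h := bar_add (f - g) g
  rw [sub_add_cancel] at h
  rw [eq_sub_iff_add_eq, ← h]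

lemma reflect_degree_le (g : Polynomial ℂ) (r : ℕ) (h : g.natDegree ≤ r) :
    (reflect r g).degree ≤ (r : ℕ) := by
  refine (degree_le_iff_coeff_zero _ _).mpr fun m hm => ?_
  have hrm : r < m := by exact_mod_cast hm
  rw [coeff_reflect, revAt_eq_self_of_lt hrm]
  exact coeff_eq_zero_of_natDegree_lt (lt_of_le_of_lt h hrm)

variable (α : ℕ → ℂ)

lemma szego_monic : ∀ n, (szego α n).Monic ∧ (szego α n).natDegree = n := by
  intro n
  induction n with
  | zero => exact ⟨monic_one, natDegree_one⟩
  | succ n ih =>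
    have hm : (Polynomial.X * szego α n).Monic := monic_X.mul ih.1
    have hd : (Polynomial.X * szego α n).natDegree = n + 1 := by
      rw [natDegree_X_mul (ih.1.ne_zero), ih.2]
    have hdeg : (Polynomial.X * szego α n).degree = ((n+1 : ℕ) : WithBot ℕ) := by
      rw [← hd]; exact degree_eq_natDegree hm.ne_zero
    have hlt : (Polynomial.C ((starRingEnd ℂ) (α n)) *
        reflect n ((szego α n).map (starRingEnd ℂ))).degree < (Polynomial.X * szego α n).degree := by
      rw [hdeg]
      refine lt_of_le_of_lt (degree_mul_le _ _) ?_
      have h1 : (Polynomial.C ((starRingEnd ℂ) (α n))).degree ≤ 0 := degree_C_le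
      have h2 : (reflect n ((szego α n).map (starRingEnd ℂ))).degree ≤ (n : ℕ) :=
        reflect_degree_le _ n (by rw [natDegree_map]; exact le_of_eq ih.2)
      refine lt_of_le_of_lt (add_le_add h1 h2) ?_
      simp only [zero_add]
      exact_mod_cast WithBot.coe_lt_coe.mpr (Nat.lt_succ_self n)
    constructor
    · show (Polynomial.X * szego α n - _).Monic
      rw [sub_eq_add_neg]
      exact hm.add_of_left (by rwa [degree_neg])
    · show (Polynomial.X * szego α n - _).natDegree = n + 1
      have h3 := degree_sub_eq_left_of_degree_lt hlt
      rw [hdeg] at h3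
      exact natDegree_eq_of_degree_eq_some h3

def phi (n : ℕ) : LaurentPolynomial ℂ := Polynomial.toLaurent (szego α n)
def psi (n : ℕ) : LaurentPolynomial ℂ :=
  Polynomial.toLaurent (reflect n ((szego α n).map (starRingEnd ℂ)))

lemma psi_eq (n : ℕ) : psi α n = T (n : ℤ) * bar (phi α n) :=
  toLaurent_reflect _ n (le_of_eq (szego_monic α n).2)

lemma bar_phi (n : ℕ) : bar (phi α n) = T (-(n : ℤ)) * psi α n := by
  rw [psi_eq, ← mul_assoc, ← T_add, neg_add_cancel, T_zero, one_mul]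

lemma bar_psi (n : ℕ) : bar (psi α n) = T (-(n : ℤ)) * phi α n := by
  rw [psi_eq, bar_mul, bar_T, bar_bar]

lemma phi_rec (n : ℕ) :
    phi α (n+1) = T 1 * phi α n - LaurentPolynomial.C ((starRingEnd ℂ) (α n)) * psi α n := by
  show Polynomial.toLaurent (Polynomial.X * szego α n - _) = _
  rw [map_sub, map_mul, map_mul, Polynomial.toLaurent_X, Polynomial.toLaurent_C]
  rfl

lemma psi_rec (n : ℕ) :
    psi α (n+1) = psi α n - LaurentPolynomial.C (α n) * (T 1 * phi α n) := by
  have h1 : bar (phi α (n+1))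
      = T (-1) * bar (phi α n) - LaurentPolynomial.C (α n) * (T (-(n:ℤ)) * phi α n) := by
    rw [phi_rec, bar_sub, bar_mul, bar_mul, bar_T, bar_C, bar_psi]
    simp [Complex.conj_conj]
  rw [psi_eq, h1, psi_eq α n]
  push_cast
  rw [mul_sub]
  congr 1
  · rw [← mul_assoc, ← T_add]
    congr 2
    ring
  · rw [mul_left_comm, ← mul_assoc (T ((n:ℤ)+1)), ← T_add,
      show ((n:ℤ) + 1 + -(n:ℤ)) = 1 by ring]


def polyBarInv (f : Polynomial ℂ) : LaurentPolynomial ℂ :=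
  f.sum fun k c => LaurentPolynomial.C ((starRingEnd ℂ) c) * LaurentPolynomial.T (-(k : ℤ))

lemma polyBarInv_eq (f : Polynomial ℂ) : polyBarInv f = bar (Polynomial.toLaurent f) := by
  rw [toLaurent_rep f (f.natDegree+1) (lt_add_one _), bar_sum]
  unfold polyBarInv
  rw [Polynomial.sum_over_range' f (by intro m; simp) (f.natDegree+1) (lt_add_one _)]
  refine Finset.sum_congr rfl fun k _ => ?_
  rw [bar_mul, bar_C, bar_T]

variable (L : LaurentPolynomial ℂ →ₗ[ℂ] ℂ)

lemma L_C_mul (a : ℂ) (f : LaurentPolynomial ℂ) :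
    L (LaurentPolynomial.C a * f) = a * L f := by
  have h : LaurentPolynomial.C a * f = a • f := by
    rw [Algebra.smul_def, ← LaurentPolynomial.C_eq_algebraMap]
  rw [h, map_smul, smul_eq_mul]

variable (hL1 : L 1 = 1)
  (hLphi : ∀ k : ℕ, 1 ≤ k → L (Polynomial.toLaurent (szego α k)) = 0)
  (hLbar : ∀ k : ℕ, 1 ≤ k → L (polyBarInv (szego α k)) = 0)

section Lvanish
include hLphi hLbar

lemma Lzero : ∀ n : ℕ, (∀ k : ℕ, k < n → L (T (-(k:ℤ)) * phi α n) = 0) ∧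
    (∀ k : ℕ, 1 ≤ k → k ≤ n → L (T (-(k:ℤ)) * psi α n) = 0) := by
  intro n
  induction n with
  | zero => exact ⟨fun k hk => absurd hk (Nat.not_lt_zero k), fun k h1 h2 => by omega⟩
  | succ n ih =>
    constructor
    · intro k hk
      rcases Nat.eq_zero_or_pos k with hk0 | hk1
      · subst hk0
        simp only [Nat.cast_zero, neg_zero, T_zero, one_mul]
        exact hLphi (n+1) (Nat.succ_le_succ (Nat.zero_le n))
      · have hkn : k ≤ n := Nat.lt_succ_iff.mp hk
        rw [phi_rec, mul_sub, map_sub]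
        have e1 : T (-(k:ℤ)) * (T 1 * phi α n) = T (-((k-1:ℕ):ℤ)) * phi α n := by
          rw [← mul_assoc, ← T_add]
          congr 2
          have : (1:ℕ) ≤ k := hk1
          push_cast [Nat.cast_sub this]
          ring
        have e2 : T (-(k:ℤ)) * (LaurentPolynomial.C ((starRingEnd ℂ) (α n)) * psi α n)
            = LaurentPolynomial.C ((starRingEnd ℂ) (α n)) * (T (-(k:ℤ)) * psi α n) := by
          rw [mul_left_comm]
        rw [e1, e2, L_C_mul, ih.1 (k-1) (by omega), ih.2 k hk1 hkn, mul_zero, sub_zero]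
    · intro k h1 h2
      rcases Nat.lt_succ_iff_lt_or_eq.mp (Nat.lt_succ_of_le h2) with hkn | hke
      · have hkn'' : k ≤ n := by omega
        rw [psi_rec, mul_sub, map_sub]
        have e2 : T (-(k:ℤ)) * (LaurentPolynomial.C (α n) * (T 1 * phi α n))
            = LaurentPolynomial.C (α n) * (T (-((k-1:ℕ):ℤ)) * phi α n) := by
          rw [mul_left_comm]
          congr 1
          rw [← mul_assoc, ← T_add]
          congr 2
          push_cast [Nat.cast_sub h1]
          ring
        rw [e2, L_C_mul, ih.2 k h1 hkn'', ih.1 (k-1) (by omega), mul_zero, sub_zero]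
      · subst hke
        have e : T (-((n+1:ℕ):ℤ)) * psi α (n+1) = bar (phi α (n+1)) := by
          rw [bar_phi]
        rw [e, show bar (phi α (n+1)) = polyBarInv (szego α (n+1)) from (polyBarInv_eq _).symm]
        exact hLbar (n+1) (Nat.succ_le_succ (Nat.zero_le n))

end Lvanish

include hL1 hLphi hLbar in
lemma Lnorm : ∀ n : ℕ, L (T (-(n:ℤ)) * phi α n)
    = ∏ j ∈ range n, ((1 - Complex.normSq (α j) : ℝ) : ℂ) := by
  intro n
  induction n with
  | zero =>
    simp only [Nat.cast_zero, neg_zero, T_zero, one_mul, range_zero, prod_empty]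
    have : phi α 0 = 1 := Polynomial.toLaurent_one
    rw [this, hL1]
  | succ n ih =>
    have key : T (-((n+1:ℕ):ℤ)) * psi α n
        = bar (phi α (n+1)) + LaurentPolynomial.C (α n) * (T (-(n:ℤ)) * phi α n) := by
      have h1 : bar (T 1 * phi α n)
          = bar (phi α (n+1)) + LaurentPolynomial.C (α n) * (T (-(n:ℤ)) * phi α n) := by
        have h := congrArg bar (phi_rec α n)
        rw [bar_sub, bar_mul (LaurentPolynomial.C _), bar_C, bar_psi, Complex.conj_conj] at h
        rw [eq_sub_iff_add_eq] at h
        exact h.symm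
      have h2 : bar (T 1 * phi α n) = T (-((n+1:ℕ):ℤ)) * psi α n := by
        rw [bar_mul, bar_T, bar_phi, ← mul_assoc, ← T_add]
        congr 2
        push_cast
        ring
      rw [← h2, h1]
    have e1 : T (-((n+1:ℕ):ℤ)) * (T 1 * phi α n) = T (-(n:ℤ)) * phi α n := by
      rw [← mul_assoc, ← T_add]
      congr 2
      push_cast
      ring
    have e2 : T (-((n+1:ℕ):ℤ)) * (LaurentPolynomial.C ((starRingEnd ℂ) (α n)) * psi α n)
        = LaurentPolynomial.C ((starRingEnd ℂ) (α n)) * (T (-((n+1:ℕ):ℤ)) * psi α n) := by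
      rw [mul_left_comm]
    rw [phi_rec, mul_sub, map_sub, e1, e2, L_C_mul, key, map_add, L_C_mul,
      show bar (phi α (n+1)) = polyBarInv (szego α (n+1)) from (polyBarInv_eq _).symm,
      hLbar (n+1) (Nat.succ_le_succ (Nat.zero_le n)), zero_add, ih]
    rw [prod_range_succ]
    have : (starRingEnd ℂ) (α n) * (α n) = ((Complex.normSq (α n) : ℝ) : ℂ) := by
      rw [mul_comm, Complex.mul_conj]
    rw [← mul_assoc, this]
    push_cast
    ring


local notation "Cl" => LaurentPolynomial.C

def kp (j : ℕ) : ℂ := ((1 - Complex.normSq (α j) : ℝ) : ℂ)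

def kpr (s : ℕ) : ℂ := ∏ j ∈ range s, kp α j

def cc (m j : ℕ) : ℂ := -(az α ((j:ℤ)-1)) * ∏ i ∈ Finset.Ico j m, kp α i

lemma psi_expand : ∀ m, psi α m = ∑ j ∈ range (m+1), Cl (cc α m j) * phi α j := by
  intro m
  induction m with
  | zero =>
    have h0 : psi α 0 = 1 := by
      show Polynomial.toLaurent (reflect 0 ((szego α 0).map (starRingEnd ℂ))) = 1
      show Polynomial.toLaurent (reflect 0 ((1 : Polynomial ℂ).map (starRingEnd ℂ))) = 1
      rw [Polynomial.map_one, reflect_one, pow_zero, Polynomial.toLaurent_one]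
    have h1 : cc α 0 0 = 1 := by
      unfold cc az
      norm_num
    rw [h0, Finset.sum_range_one, h1]
    have : phi α 0 = 1 := Polynomial.toLaurent_one
    rw [this, map_one, one_mul]
  | succ m ih =>
    have hT : T 1 * phi α m = phi α (m+1) + Cl ((starRingEnd ℂ) (α m)) * psi α m := by
      rw [phi_rec]; ring
    have hkk : (Cl (kp α m) : LaurentPolynomial ℂ)
        = 1 - Cl (α m) * Cl ((starRingEnd ℂ) (α m)) := by
      rw [← map_mul, show (1 : LaurentPolynomial ℂ) = Cl 1 from rfl, ← map_sub]
      congr 1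
      rw [Complex.mul_conj, kp]
      push_cast
      ring
    have step : psi α (m+1) = Cl (kp α m) * psi α m - Cl (α m) * phi α (m+1) := by
      rw [psi_rec α m, hT, hkk]
      ring
    rw [step, ih, Finset.mul_sum]
    conv_rhs => rw [Finset.sum_range_succ]
    rw [sub_eq_add_neg]
    congr 1
    · refine Finset.sum_congr rfl fun j hj => ?_
      rw [← mul_assoc, ← map_mul]
      congr 2
      have hjm : j ≤ m := Finset.mem_range_succ_iff.mp hj
      unfold cc
      rw [Finset.prod_Ico_succ_top hjm]
      ring
    · have : cc α (m+1) (m+1) = -(α m) := by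
        unfold cc az
        rw [Finset.Ico_self, Finset.prod_empty]
        have h1 : ((m+1 : ℕ) : ℤ) - 1 = (m : ℤ) := by push_cast; ring
        rw [h1]
        simp
      rw [this, map_neg]
      ring

/-- the numerator `⟨Φ_s, z^n Φ_c⟩`. -/
def num (L : LaurentPolynomial ℂ →ₗ[ℂ] ℂ) (n : ℕ) (c s : ℕ) : ℂ :=
  L (phi α s * (T (-(n:ℤ)) * bar (phi α c)))

lemma bar_phi_rep (c : ℕ) :
    bar (phi α c) = ∑ k ∈ range (c+1), Cl ((starRingEnd ℂ) ((szego α c).coeff k)) * T (-(k:ℤ)) := by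
  rw [show phi α c = Polynomial.toLaurent (szego α c) from rfl,
    toLaurent_rep _ (c+1) (by rw [(szego_monic α c).2]; omega), bar_sum]
  exact Finset.sum_congr rfl fun k _ => by rw [bar_mul, bar_C, bar_T]

section ortho

variable (hL1 : L 1 = 1)
  (hLphi : ∀ k : ℕ, 1 ≤ k → L (Polynomial.toLaurent (szego α k)) = 0)
  (hLbar : ∀ k : ℕ, 1 ≤ k → L (polyBarInv (szego α k)) = 0)

include hL1 hLphi hLbar

lemma orth (c s : ℕ) : L (phi α s * bar (phi α c)) = if s = c then kpr α s else 0 := by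
  rcases lt_trichotomy s c with h | h | h
  · -- s < c
    rw [if_neg (by omega)]
    rw [bar_phi, show phi α s = Polynomial.toLaurent (szego α s) from rfl,
      toLaurent_rep _ (s+1) (by rw [(szego_monic α s).2]; omega)]
    rw [Finset.sum_mul, map_sum]
    refine Finset.sum_eq_zero fun k hk => ?_
    have hks : k ≤ s := Finset.mem_range_succ_iff.mp hk
    have e : (Cl ((szego α s).coeff k) * T (k:ℤ)) * (T (-(c:ℤ)) * psi α c)
        = Cl ((szego α s).coeff k) * (T (-((c-k:ℕ):ℤ)) * psi α c) := by
      rw [show (-((c-k:ℕ):ℤ)) = (k:ℤ) + -(c:ℤ) by omega, T_add]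
      ring
    rw [e, L_C_mul, (Lzero α L hLphi hLbar c).2 (c-k) (by omega) (by omega), mul_zero]
  · -- s = c
    subst h
    rw [if_pos rfl, bar_phi_rep, Finset.mul_sum, map_sum]
    have hterm : ∀ k ∈ range (s+1),
        L (phi α s * (Cl ((starRingEnd ℂ) ((szego α s).coeff k)) * T (-(k:ℤ))))
        = (starRingEnd ℂ) ((szego α s).coeff k) * L (T (-(k:ℤ)) * phi α s) := by
      intro k _
      rw [show phi α s * (Cl ((starRingEnd ℂ) ((szego α s).coeff k)) * T (-(k:ℤ)))
          = Cl ((starRingEnd ℂ) ((szego α s).coeff k)) * (T (-(k:ℤ)) * phi α s) by ring,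
        L_C_mul]
    rw [Finset.sum_congr rfl hterm, Finset.sum_range_succ]
    have hlast : (szego α s).coeff s = 1 := by
      have h2 := (szego_monic α s).1.coeff_natDegree
      rwa [(szego_monic α s).2] at h2
    rw [hlast, map_one, one_mul, Lnorm α L hL1 hLphi hLbar s]
    rw [Finset.sum_eq_zero, zero_add]
    · rfl
    · intro k hk
      rw [(Lzero α L hLphi hLbar s).1 k (Finset.mem_range.mp hk), mul_zero]
  · -- s > c
    rw [if_neg (by omega), bar_phi_rep, Finset.mul_sum, map_sum]
    refine Finset.sum_eq_zero fun k hk => ?_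
    rw [show phi α s * (Cl ((starRingEnd ℂ) ((szego α c).coeff k)) * T (-(k:ℤ)))
        = Cl ((starRingEnd ℂ) ((szego α c).coeff k)) * (T (-(k:ℤ)) * phi α s) by ring,
      L_C_mul, (Lzero α L hLphi hLbar s).1 k (by have := Finset.mem_range_succ_iff.mp hk; omega),
      mul_zero]

end ortho

/-- one-step weights (algebraic form). -/
def Wc (c j : ℕ) : ℂ := α c * (starRingEnd ℂ) (cc α c j)

lemma num_zero (hL1 : L 1 = 1)
    (hLphi : ∀ k : ℕ, 1 ≤ k → L (Polynomial.toLaurent (szego α k)) = 0)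
    (hLbar : ∀ k : ℕ, 1 ≤ k → L (polyBarInv (szego α k)) = 0) (c s : ℕ) :
    num α L 0 c s = if s = c then kpr α s else 0 := by
  unfold num
  rw [Nat.cast_zero, neg_zero, T_zero, one_mul]
  exact orth α L hL1 hLphi hLbar c s

lemma num_rec (n c s : ℕ) :
    num α L (n+1) c s = num α L n (c+1) s + ∑ j ∈ range (c+1), Wc α c j * num α L n j s := by
  have expand : bar (T 1 * phi α c)
      = bar (phi α (c+1)) + ∑ j ∈ range (c+1), Cl (Wc α c j) * bar (phi α j) := by
    rw [show T 1 * phi α c = phi α (c+1) + Cl ((starRingEnd ℂ) (α c)) * psi α c by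
        rw [phi_rec]; ring,
      bar_add, bar_mul, bar_C, Complex.conj_conj, psi_expand, bar_sum, Finset.mul_sum]
    rw [add_right_inj]
    refine Finset.sum_congr rfl fun j _ => ?_
    rw [bar_mul, bar_C, ← mul_assoc, ← map_mul]
    rfl
  have e : T (-((n+1:ℕ):ℤ)) * bar (phi α c) = T (-(n:ℤ)) * bar (T 1 * phi α c) := by
    rw [bar_mul, bar_T, ← mul_assoc, ← T_add]
    congr 2
    push_cast
    ring
  unfold num
  rw [e, expand, mul_add, mul_add, map_add]
  congr 1
  rw [Finset.mul_sum, Finset.mul_sum, map_sum]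
  refine Finset.sum_congr rfl fun j _ => ?_
  rw [show phi α s * (T (-(n:ℤ)) * (Cl (Wc α c j) * bar (phi α j)))
      = Cl (Wc α c j) * (phi α s * (T (-(n:ℤ)) * bar (phi α j))) by ring, L_C_mul]




def pathsSet (p q : ℤ × ℤ) : Set (List (ℤ × ℤ)) := {l | IsLatticePath lukaStep p l q}

def PS (p q : ℤ × ℤ) : ℂ := ∑ᶠ l ∈ pathsSet p q, pathWeight (wtLstep α) p l

lemma isLP_start_nonneg {p q : ℤ × ℤ} {l : List (ℤ × ℤ)}
    (h : IsLatticePath lukaStep p l q) : 0 ≤ p.2 := by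
  cases l with
  | nil => exact h.2
  | cons st rest => exact h.1

lemma isLP_length : ∀ (l : List (ℤ × ℤ)) (p q : ℤ × ℤ),
    IsLatticePath lukaStep p l q → q.1 = p.1 + l.length := by
  intro l
  induction l with
  | nil => intro p q h; rw [← h.1]; simp
  | cons st rest ih =>
    intro p q h
    obtain ⟨h0, hS, hrest⟩ := h
    have h2 := ih (p + st) q hrest
    have h3 : st.1 = 1 := hS.1
    simp only [Prod.fst_add, h3, List.length_cons] at h2 ⊢
    push_cast at h2 ⊢
    omega

lemma pathsSet_eq_of_eq_fst {p q : ℤ × ℤ} (h : p.1 = q.1) :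
    pathsSet p q = if p = q ∧ 0 ≤ p.2 then {[]} else ∅ := by
  ext l
  constructor
  · intro hl
    have hlen := isLP_length l p q hl
    have : l.length = 0 := by omega
    rw [List.length_eq_zero_iff] at this
    subst this
    have hc : p = q ∧ 0 ≤ p.2 := hl
    rw [if_pos hc]
    rfl
  · intro hl
    by_cases hc : p = q ∧ 0 ≤ p.2
    · rw [if_pos hc] at hl
      cases hl
      exact hc
    · rw [if_neg hc] at hl
      exact absurd hl (Set.notMem_empty l)

lemma pathsSet_cons {p q : ℤ × ℤ} (h : p.1 < q.1) (hp : 0 ≤ p.2) :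
    pathsSet p q = ⋃ d ∈ ((Finset.Icc (-p.2) 1 : Finset ℤ) : Set ℤ),
      (fun l => ((1:ℤ), d) :: l) '' pathsSet (p + (1, d)) q := by
  ext l
  simp only [Set.mem_iUnion, Finset.mem_coe, Finset.mem_Icc, Set.mem_image]
  constructor
  · intro hl
    cases l with
    | nil =>
      exfalso
      have := hl.1
      rw [this] at h
      exact lt_irrefl _ h
    | cons st rest =>
      obtain ⟨h0, hS, hrest⟩ := hl
      have hst : st = ((1:ℤ), st.2) := by
        ext
        · exact hS.1
        · rfl
      have hnn : 0 ≤ (p + st).2 := isLP_start_nonneg hrest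
      refine ⟨st.2, ⟨⟨?_, hS.2⟩, rest, ?_, ?_⟩⟩
      · simp only [Prod.snd_add] at hnn; omega
      · rw [← hst]; exact hrest
      · rw [← hst]
  · rintro ⟨d, ⟨hd1, hd2⟩, m, hm, rfl⟩
    exact ⟨hp, ⟨rfl, hd2⟩, hm⟩

lemma pathsSet_finite : ∀ (N : ℕ) (p q : ℤ × ℤ), q.1 = p.1 + N → (pathsSet p q).Finite := by
  intro N
  induction N with
  | zero =>
    intro p q h
    refine Set.Finite.subset (Set.finite_singleton []) fun l hl => ?_
    have := isLP_length l p q hl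
    have : l.length = 0 := by omega
    rw [List.length_eq_zero_iff] at this
    simp [this]
  | succ N ih =>
    intro p q h
    by_cases hp : 0 ≤ p.2
    · rw [pathsSet_cons (by omega) hp]
      refine Set.Finite.biUnion (Finset.Icc (-p.2) 1).finite_toSet fun d _ => ?_
      exact Set.Finite.image _ (ih (p + (1, d)) q (by simp [Prod.fst_add] at h ⊢; omega))
    · refine Set.Finite.subset (Set.finite_empty) fun l hl => ?_
      exact absurd (isLP_start_nonneg hl) hp


lemma PS_base {p q : ℤ × ℤ} (h : p.1 = q.1) :
    PS α p q = if p = q ∧ 0 ≤ p.2 then 1 else 0 := by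
  unfold PS
  rw [pathsSet_eq_of_eq_fst h]
  by_cases hc : p = q ∧ 0 ≤ p.2
  · rw [if_pos hc, if_pos hc, finsum_mem_singleton]
    rfl
  · rw [if_neg hc, if_neg hc, finsum_mem_empty]

lemma PS_cons {p q : ℤ × ℤ} (h : p.1 < q.1) (hp : 0 ≤ p.2) :
    PS α p q = ∑ d ∈ Finset.Icc (-p.2) 1,
      wtLstep α p (1, d) * PS α (p + (1, d)) q := by
  have hN : q.1 = p.1 + ((q.1 - p.1).toNat : ℤ) := by omega
  have hfin : ∀ d : ℤ, (pathsSet (p + (1, d)) q).Finite := by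
    intro d
    rcases le_or_gt (p.1 + 1) q.1 with h' | h'
    · exact pathsSet_finite (q.1 - p.1 - 1).toNat _ _ (by simp [Prod.fst_add]; omega)
    · omega
  unfold PS
  rw [pathsSet_cons h hp,
    finsum_mem_biUnion ?disj (Finset.Icc (-p.2) 1).finite_toSet
      (fun d _ => Set.Finite.image _ (hfin d)),
    finsum_mem_coe_finset]
  case disj =>
    intro d1 _ d2 _ hne
    simp only [Function.onFun, Set.disjoint_left]
    rintro l ⟨m1, _, rfl⟩ ⟨m2, _, heq⟩
    exact hne (by injection heq with h1 _; injection h1 with _ h2; exact h2.symm)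
  refine Finset.sum_congr rfl fun d _ => ?_
  rw [finsum_mem_image (fun a _ b _ hab => by injection hab)]
  rw [finsum_mem_eq_finite_toFinset_sum _ (hfin d),
    finsum_mem_eq_finite_toFinset_sum _ (hfin d), Finset.mul_sum]
  rfl

lemma wt_shift (x x' h : ℤ) (st : ℤ × ℤ) :
    wtLstep α (x, h) st = wtLstep α (x', h) st := rfl

lemma isLP_shift (t : ℤ) : ∀ (l : List (ℤ × ℤ)) (p q : ℤ × ℤ),
    IsLatticePath lukaStep p l q →
      IsLatticePath lukaStep (p.1 + t, p.2) l (q.1 + t, q.2) := by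
  intro l
  induction l with
  | nil =>
    intro p q hl
    exact ⟨by rw [hl.1], hl.2⟩
  | cons st rest ih =>
    intro p q hl
    refine ⟨hl.1, ⟨hl.2.1.1, hl.2.1.2⟩, ?_⟩
    have := ih (p + st) q hl.2.2
    convert this using 2 <;> simp [Prod.fst_add, Prod.snd_add] <;> ring

lemma pathWeight_shift (t : ℤ) : ∀ (l : List (ℤ × ℤ)) (p : ℤ × ℤ),
    pathWeight (wtLstep α) ((p.1 + t, p.2)) l = pathWeight (wtLstep α) p l := by
  intro l
  induction l with
  | nil => intro p; rfl
  | cons st rest ih =>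
    intro p
    show wtLstep α (p.1 + t, p.2) st * pathWeight (wtLstep α) ((p.1 + t, p.2) + st) rest = _
    rw [wt_shift α _ p.1]
    show wtLstep α p st * _ = _
    congr 1
    have h2 : ((p.1 + t, p.2) + st : ℤ × ℤ) = ((p + st).1 + t, (p + st).2) := by
      simp [Prod.ext_iff, Prod.fst_add, Prod.snd_add]
      ring
    rw [h2, ih (p + st)]

lemma PS_shift (t : ℤ) (p q : ℤ × ℤ) :
    PS α (p.1 + t, p.2) (q.1 + t, q.2) = PS α p q := by
  unfold PS
  have hset : pathsSet (p.1 + t, p.2) (q.1 + t, q.2) = pathsSet p q := by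
    ext l
    constructor
    · intro hl
      have := isLP_shift (-t) l _ _ hl
      simp only [add_neg_cancel_right] at this
      exact this
    · intro hl
      exact isLP_shift t l p q hl
  rw [hset]
  exact finsum_congr fun l => by rw [pathWeight_shift]


lemma az_natCast (k : ℕ) : az α (k:ℤ) = α k := by
  simp [az]

lemma conj_kp (j : ℕ) : (starRingEnd ℂ) (kp α j) = kp α j := by
  unfold kp
  exact Complex.conj_ofReal _

lemma image_natCast_Ico (a b : ℕ) :
    (Finset.Ico a b).image (fun k : ℕ => (k:ℤ)) = Finset.Ico (a:ℤ) (b:ℤ) := by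
  ext x
  simp only [Finset.mem_image, Finset.mem_Ico]
  constructor
  · rintro ⟨k, hk, rfl⟩
    omega
  · intro hx
    exact ⟨x.toNat, by omega, by omega⟩

lemma prod_Ico_cast (f : ℤ → ℂ) (a b : ℕ) :
    ∏ i ∈ Finset.Ico (a:ℤ) (b:ℤ), f i = ∏ i ∈ Finset.Ico a b, f (i:ℤ) := by
  rw [← image_natCast_Ico, Finset.prod_image (fun x _ y _ h => by exact_mod_cast h)]

lemma sum_Icc_cast (g : ℤ → ℂ) (b : ℕ) :
    ∑ j ∈ Finset.Icc ((0:ℕ):ℤ) (b:ℤ), g j = ∑ j ∈ Finset.range (b+1), g (j:ℤ) := by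
  have h1 : Finset.Icc ((0:ℕ):ℤ) (b:ℤ) = Finset.Ico ((0:ℕ):ℤ) ((b+1:ℕ):ℤ) := by
    ext x
    simp only [Finset.mem_Icc, Finset.mem_Ico]
    omega
  rw [h1, ← image_natCast_Ico, Finset.sum_image (fun x _ y _ h => by exact_mod_cast h),
    Finset.range_eq_Ico]

lemma wt_up (x h : ℤ) : wtLstep α (x, h) (1, 1) = 1 := rfl

lemma wt_down (x : ℤ) (c j : ℕ) (hj : j ≤ c) :
    wtLstep α (x, (c:ℤ)) (1, (j:ℤ) - (c:ℤ)) = Wc α c j := by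
  unfold wtLstep Wc cc
  rw [if_neg (by simp only; omega)]
  simp only
  rw [show (c:ℤ) + ((j:ℤ) - (c:ℤ)) - 1 = (j:ℤ) - 1 by ring,
    show (c:ℤ) + ((j:ℤ) - (c:ℤ)) = (j:ℤ) by ring]
  rw [az_natCast, map_mul, map_neg, map_prod]
  have hprod : ∏ i ∈ Finset.Ico (j:ℤ) (c:ℤ), ((1 - Complex.normSq (az α i) : ℝ) : ℂ)
      = ∏ i ∈ Finset.Ico j c, kp α i := by
    rw [prod_Ico_cast]
    exact Finset.prod_congr rfl fun i _ => by rw [az_natCast]; rfl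
  rw [hprod]
  have hconj : ∏ i ∈ Finset.Ico j c, (starRingEnd ℂ) (kp α i) = ∏ i ∈ Finset.Ico j c, kp α i :=
    Finset.prod_congr rfl fun i _ => conj_kp α i
  rw [hconj]
  ring

variable (L : LaurentPolynomial ℂ →ₗ[ℂ] ℂ)

def mom (n c s : ℕ) : ℂ := num α L n c s / kpr α s

lemma kpr_ne (hα : ∀ k, ‖α k‖ < 1) (s : ℕ) : kpr α s ≠ 0 := by
  unfold kpr kp
  rw [Finset.prod_ne_zero_iff]
  intro j _
  rw [Ne, Complex.ofReal_eq_zero]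
  have hlt : Complex.normSq (α j) < 1 := by
    have h1 := hα j
    have h2 := Complex.sq_norm (α j)
    have h3 := norm_nonneg (α j)
    nlinarith
  intro h
  rw [sub_eq_zero] at h
  linarith

lemma mom_zero (hα : ∀ k, ‖α k‖ < 1) (hL1 : L 1 = 1)
    (hLphi : ∀ k : ℕ, 1 ≤ k → L (Polynomial.toLaurent (szego α k)) = 0)
    (hLbar : ∀ k : ℕ, 1 ≤ k → L (polyBarInv (szego α k)) = 0) (c s : ℕ) :
    mom α L 0 c s = if s = c then 1 else 0 := by
  unfold mom
  rw [num_zero α L hL1 hLphi hLbar]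
  by_cases h : s = c
  · rw [if_pos h, if_pos h, div_self (kpr_ne α hα s)]
  · rw [if_neg h, if_neg h, zero_div]

lemma mom_rec (n c s : ℕ) :
    mom α L (n+1) c s = mom α L n (c+1) s + ∑ j ∈ range (c+1), Wc α c j * mom α L n j s := by
  unfold mom
  rw [num_rec, add_div, Finset.sum_div]
  congr 1
  exact Finset.sum_congr rfl fun j _ => by rw [mul_div_assoc]

lemma PS_shift' (t x h y k : ℤ) : PS α (x + t, h) (y + t, k) = PS α (x, h) (y, k) :=
  PS_shift α t (x, h) (y, k)

lemma finsum_biUnion_cons (p q : ℤ × ℤ) (D : Finset ℤ)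
    (hfin : ∀ d : ℤ, (pathsSet (p + (1, d)) q).Finite) :
    (∑ᶠ l ∈ ⋃ d ∈ ((D : Finset ℤ) : Set ℤ),
        (fun l => ((1:ℤ), d) :: l) '' pathsSet (p + (1, d)) q,
      pathWeight (wtLstep α) p l)
    = ∑ d ∈ D, wtLstep α p (1, d) * PS α (p + (1, d)) q := by
  rw [finsum_mem_biUnion ?disj D.finite_toSet (fun d _ => Set.Finite.image _ (hfin d)),
    finsum_mem_coe_finset]
  case disj =>
    intro d1 _ d2 _ hne
    simp only [Function.onFun, Set.disjoint_left]
    rintro l ⟨m1, _, rfl⟩ ⟨m2, _, heq⟩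
    exact hne (by injection heq with h1 _; injection h1 with _ h2; exact h2.symm)
  refine Finset.sum_congr rfl fun d _ => ?_
  rw [finsum_mem_image (fun a _ b _ hab => by injection hab)]
  rw [finsum_mem_eq_finite_toFinset_sum _ (hfin d), PS,
    finsum_mem_eq_finite_toFinset_sum _ (hfin d), Finset.mul_sum]
  rfl

variable {L}

lemma main (hα : ∀ k, ‖α k‖ < 1) (hL1 : L 1 = 1)
    (hLphi : ∀ k : ℕ, 1 ≤ k → L (Polynomial.toLaurent (szego α k)) = 0)
    (hLbar : ∀ k : ℕ, 1 ≤ k → L (polyBarInv (szego α k)) = 0) :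
    ∀ n c s : ℕ, PS α ((0:ℤ), (c:ℤ)) ((n:ℤ), (s:ℤ)) = mom α L n c s := by
  intro n
  induction n with
  | zero =>
    intro c s
    rw [mom_zero α L hα hL1 hLphi hLbar, Nat.cast_zero,
      PS_base α (p := ((0:ℤ), (c:ℤ))) (q := ((0:ℤ), (s:ℤ))) rfl]
    by_cases h : s = c
    · subst h
      rw [if_pos ⟨rfl, by simp⟩, if_pos rfl]
    · have hne : ¬((((0:ℤ), (c:ℤ)) = ((0:ℤ), (s:ℤ))) ∧ 0 ≤ (((0:ℤ), (c:ℤ))).2) := by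
        rintro ⟨h1, -⟩
        apply h
        have h2 := congrArg Prod.snd h1
        simp only at h2
        exact_mod_cast h2.symm
      rw [if_neg hne, if_neg h]
  | succ n ih =>
    intro c s
    rw [PS_cons α (p := ((0:ℤ), (c:ℤ))) (q := (((n+1:ℕ):ℤ), (s:ℤ)))
      (by simp only; push_cast; omega) (by simp only; positivity)]
    have hstep : ∀ d : ℤ, PS α (((0:ℤ), (c:ℤ)) + (1, d)) (((n+1:ℕ):ℤ), (s:ℤ))
        = PS α ((0:ℤ), (c:ℤ) + d) ((n:ℤ), (s:ℤ)) := by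
      intro d
      have e1 : (((0:ℤ), (c:ℤ)) + (1, d)) = ((0:ℤ) + 1, (c:ℤ) + d) := rfl
      have e2 : (((n+1:ℕ):ℤ), (s:ℤ)) = ((n:ℤ) + 1, (s:ℤ)) := by norm_num
      rw [e1, e2, PS_shift']
    have hsum1 : ∑ d ∈ Finset.Icc (-(c:ℤ)) 1,
        wtLstep α ((0:ℤ), (c:ℤ)) (1, d) * PS α (((0:ℤ), (c:ℤ)) + (1, d)) (((n+1:ℕ):ℤ), (s:ℤ))
        = ∑ j ∈ Finset.Icc ((0:ℕ):ℤ) ((c+1:ℕ):ℤ),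
            wtLstep α ((0:ℤ), (c:ℤ)) (1, j - (c:ℤ)) * PS α ((0:ℤ), j) ((n:ℤ), (s:ℤ)) := by
      have hIcc : Finset.Icc ((0:ℕ):ℤ) ((c+1:ℕ):ℤ)
          = (Finset.Icc (-(c:ℤ)) 1).map (addLeftEmbedding (c:ℤ)) := by
        rw [map_add_left_Icc]
        congr 1 <;> push_cast <;> ring
      rw [hIcc, Finset.sum_map]
      refine Finset.sum_congr rfl fun d hd => ?_
      rw [hstep]
      simp only [addLeftEmbedding_apply]
      rw [show (c:ℤ) + d - (c:ℤ) = d by ring]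
    rw [hsum1, sum_Icc_cast (fun j => wtLstep α ((0:ℤ), (c:ℤ)) (1, j - (c:ℤ))
        * PS α ((0:ℤ), j) ((n:ℤ), (s:ℤ))) (c+1), Finset.sum_range_succ]
    have htop : wtLstep α ((0:ℤ), (c:ℤ)) (1, ((c+1:ℕ):ℤ) - (c:ℤ))
        * PS α ((0:ℤ), ((c+1:ℕ):ℤ)) ((n:ℤ), (s:ℤ)) = mom α L n (c+1) s := by
      rw [show ((c+1:ℕ):ℤ) - (c:ℤ) = 1 by push_cast; ring, wt_up, one_mul]
      exact ih (c+1) s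
    have hrest : ∀ j ∈ Finset.range (c+1),
        wtLstep α ((0:ℤ), (c:ℤ)) (1, (j:ℤ) - (c:ℤ)) * PS α ((0:ℤ), (j:ℤ)) ((n:ℤ), (s:ℤ))
        = Wc α c j * mom α L n j s := by
      intro j hj
      rw [wt_down α 0 c j (Finset.mem_range_succ_iff.mp hj), ih j s]
    rw [htop, Finset.sum_congr rfl hrest, mom_rec]
    ring

end OPUC

/-- the generalized linearization coefficient
`ν_{n,r,s} = ⟨Φ_s(z), zⁿ·Φ_r^*(z)⟩ / ⟨Φ_s(z), Φ_s(z)⟩`, for `α_r ≠ 0`, equals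
`α_r⁻¹` times the weight sum over Łukasiewicz paths from `(-1,r)` to `(n,s)` whose
first step is not an up-step. -/
theorem nu_eq_luka (α : ℕ → ℂ) (hα : ∀ k, ‖α k‖ < 1)
    (L : LaurentPolynomial ℂ →ₗ[ℂ] ℂ) (hL1 : L 1 = 1)
    (hLphi : ∀ k : ℕ, 1 ≤ k → L (Polynomial.toLaurent (szego α k)) = 0)
    (hLbar : ∀ k : ℕ, 1 ≤ k → L (polyBarInv (szego α k)) = 0)
    (n r s : ℕ) (hαr : α r ≠ 0) :
    L (Polynomial.toLaurent (szego α s) *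
        laurentBarInv (LaurentPolynomial.T (n : ℤ) *
          Polynomial.toLaurent (Polynomial.reflect r ((szego α r).map (starRingEnd ℂ))))) /
      (∏ j ∈ Finset.range s, ((1 - Complex.normSq (α j) : ℝ) : ℂ)) =
    (α r)⁻¹ *
      ∑ᶠ p ∈ {l : List (ℤ × ℤ) |
          IsLatticePath lukaStep (-1, (r : ℤ)) l ((n : ℤ), (s : ℤ)) ∧
            l.head? ≠ some (1, 1)},
        pathWeight (wtLstep α) (-1, (r : ℤ)) p := by
  classical
  have hnum : L (Polynomial.toLaurent (szego α s) *
      laurentBarInv (LaurentPolynomial.T (n:ℤ) *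
        Polynomial.toLaurent (Polynomial.reflect r ((szego α r).map (starRingEnd ℂ)))))
      = ∑ j ∈ Finset.range (r+1),
          (starRingEnd ℂ) (OPUC.cc α r j) * OPUC.num α L n j s := by
    have h1 : Polynomial.toLaurent (Polynomial.reflect r ((szego α r).map (starRingEnd ℂ)))
        = OPUC.psi α r := rfl
    rw [h1, OPUC.bar_mul, OPUC.bar_T, OPUC.psi_expand, OPUC.bar_sum]
    have h2 : ∀ j ∈ Finset.range (r+1),
        laurentBarInv (LaurentPolynomial.C (OPUC.cc α r j) * OPUC.phi α j)
        = LaurentPolynomial.C ((starRingEnd ℂ) (OPUC.cc α r j)) * laurentBarInv (OPUC.phi α j) :=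
      fun j _ => by rw [OPUC.bar_mul, OPUC.bar_C]
    rw [Finset.sum_congr rfl h2, Finset.mul_sum, Finset.mul_sum, map_sum]
    refine Finset.sum_congr rfl fun j _ => ?_
    rw [show Polynomial.toLaurent (szego α s) *
        (LaurentPolynomial.T (-(n:ℤ)) *
          (LaurentPolynomial.C ((starRingEnd ℂ) (OPUC.cc α r j)) * laurentBarInv (OPUC.phi α j)))
        = LaurentPolynomial.C ((starRingEnd ℂ) (OPUC.cc α r j)) *
          (OPUC.phi α s * (LaurentPolynomial.T (-(n:ℤ)) * laurentBarInv (OPUC.phi α j))) by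
      show Polynomial.toLaurent (szego α s) * _ = _ * (Polynomial.toLaurent (szego α s) * _)
      ring]
    rw [OPUC.L_C_mul]
    rfl
  have hlhs : L (Polynomial.toLaurent (szego α s) *
      laurentBarInv (LaurentPolynomial.T (n:ℤ) *
        Polynomial.toLaurent (Polynomial.reflect r ((szego α r).map (starRingEnd ℂ))))) /
      (∏ j ∈ Finset.range s, ((1 - Complex.normSq (α j) : ℝ) : ℂ))
      = ∑ j ∈ Finset.range (r+1),
          (starRingEnd ℂ) (OPUC.cc α r j) * OPUC.mom α L n j s := by
    rw [hnum]
    show _ / OPUC.kpr α s = _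
    rw [Finset.sum_div]
    exact Finset.sum_congr rfl fun j _ => by rw [mul_div_assoc]; rfl
  have hfin : ∀ d : ℤ,
      (OPUC.pathsSet (((-1:ℤ), (r:ℤ)) + (1, d)) ((n:ℤ), (s:ℤ))).Finite := by
    intro d
    refine OPUC.pathsSet_finite n _ _ ?_
    simp only [Prod.fst_add]
    omega
  have hdec : {l : List (ℤ × ℤ) |
      IsLatticePath lukaStep (-1, (r : ℤ)) l ((n : ℤ), (s : ℤ)) ∧ l.head? ≠ some (1, 1)}
      = ⋃ d ∈ ((Finset.Icc (-(r:ℤ)) 0 : Finset ℤ) : Set ℤ),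
          (fun l => ((1:ℤ), d) :: l) ''
            OPUC.pathsSet (((-1:ℤ), (r:ℤ)) + (1, d)) ((n:ℤ), (s:ℤ)) := by
    ext l
    simp only [Set.mem_iUnion, Finset.mem_coe, Finset.mem_Icc, Set.mem_image, Set.mem_setOf_eq]
    constructor
    · rintro ⟨hl, hhead⟩
      cases l with
      | nil =>
        exfalso
        have h3 := congrArg Prod.fst hl.1
        simp only at h3
        omega
      | cons st rest =>
        obtain ⟨h0, hS, hrest⟩ := hl
        have hst : st = ((1:ℤ), st.2) := by
          ext
          · exact hS.1
          · rfl
        have hd1 : st.2 ≠ 1 := by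
          intro h1
          apply hhead
          rw [List.head?_cons, hst, h1]
        have hnn : 0 ≤ (((-1:ℤ), (r:ℤ)) + st).2 := OPUC.isLP_start_nonneg hrest
        simp only [Prod.snd_add] at hnn
        have hS2 := hS.2
        refine ⟨st.2, ⟨by omega, by omega⟩, rest, ?_, ?_⟩
        · rw [← hst]
          exact hrest
        · rw [← hst]
    · rintro ⟨d, ⟨hd1, hd2⟩, m, hm, rfl⟩
      refine ⟨⟨by simp, ⟨rfl, by omega⟩, hm⟩, ?_⟩
      simp only [List.head?_cons, Ne, Option.some.injEq, Prod.mk.injEq]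
      rintro ⟨-, h1⟩
      omega
  have hrhs : (∑ᶠ p ∈ {l : List (ℤ × ℤ) |
        IsLatticePath lukaStep (-1, (r : ℤ)) l ((n : ℤ), (s : ℤ)) ∧ l.head? ≠ some (1, 1)},
      pathWeight (wtLstep α) (-1, (r : ℤ)) p)
      = ∑ d ∈ Finset.Icc (-(r:ℤ)) 0, wtLstep α ((-1:ℤ), (r:ℤ)) (1, d) *
          OPUC.PS α (((-1:ℤ), (r:ℤ)) + (1, d)) ((n:ℤ), (s:ℤ)) := by
    rw [hdec]
    exact OPUC.finsum_biUnion_cons α ((-1:ℤ), (r:ℤ)) ((n:ℤ), (s:ℤ)) _ hfin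
  rw [hlhs, hrhs]
  have hstep : ∀ d : ℤ, OPUC.PS α (((-1:ℤ), (r:ℤ)) + (1, d)) ((n:ℤ), (s:ℤ))
      = OPUC.PS α ((0:ℤ), (r:ℤ) + d) ((n:ℤ), (s:ℤ)) := by
    intro d
    have e1 : (((-1:ℤ), (r:ℤ)) + (1, d)) = ((0:ℤ), (r:ℤ) + d) := by
      simp [Prod.ext_iff]
    rw [e1]
  have hsum1 : (∑ d ∈ Finset.Icc (-(r:ℤ)) 0, wtLstep α ((-1:ℤ), (r:ℤ)) (1, d) *
        OPUC.PS α (((-1:ℤ), (r:ℤ)) + (1, d)) ((n:ℤ), (s:ℤ)))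
      = ∑ j ∈ Finset.Icc ((0:ℕ):ℤ) ((r:ℕ):ℤ),
          wtLstep α ((-1:ℤ), (r:ℤ)) (1, j - (r:ℤ)) *
            OPUC.PS α ((0:ℤ), j) ((n:ℤ), (s:ℤ)) := by
    have hIcc : Finset.Icc ((0:ℕ):ℤ) ((r:ℕ):ℤ)
        = (Finset.Icc (-(r:ℤ)) 0).map (addLeftEmbedding (r:ℤ)) := by
      rw [map_add_left_Icc]
      congr 1 <;> push_cast <;> ring
    rw [hIcc, Finset.sum_map]
    refine Finset.sum_congr rfl fun d hd => ?_
    rw [hstep]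
    simp only [addLeftEmbedding_apply]
    rw [show (r:ℤ) + d - (r:ℤ) = d by ring]
  rw [hsum1, OPUC.sum_Icc_cast (fun j => wtLstep α ((-1:ℤ), (r:ℤ)) (1, j - (r:ℤ)) *
      OPUC.PS α ((0:ℤ), j) ((n:ℤ), (s:ℤ))) r, Finset.mul_sum]
  refine (Finset.sum_congr rfl fun j hj => ?_).symm
  have hjr : j ≤ r := Finset.mem_range_succ_iff.mp hj
  rw [OPUC.wt_down α (-1) r j hjr, OPUC.main α hα hL1 hLphi hLbar n j s]
  show (α r)⁻¹ * (OPUC.Wc α r j * OPUC.mom α L n j s) = _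
  rw [OPUC.Wc, mul_assoc, ← mul_assoc (α r)⁻¹, inv_mul_cancel₀ hαr, one_mul]

end
end
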